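/- Let f: ℤ_p → ℤ_p be continuous and define its van der Put coefficients B_m by B_m = f(m) if 0 ≤ m ≤ p-1, and B_m = f(m) - f(m - m_{n-1}p^{n-1}) if m ≥ p, where m = m_0 + ... + m_{n-1}p^{n-1} is the base-p expansion of m with m_{n-1} ≠ 0. Then f(x) = Σ_{m=0}^∞ B_m χ(m, x) for all x ∈ ℤ_p, where χ(m, x) is the characteristic function of the ball m + p^{⌊log_p m⌋ + 1}ℤ_p (with ⌊log_p 0⌋ = 0), and the series converges uniformly. -/

import Mathlib

open scoped Classical

/-- The van der Put basis function: characteristic function of the ball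
`m + p^(⌊log_p m⌋ + 1) ℤ_p` (with `⌊log_p 0⌋ = 0`). -/
noncomputable def vdpChi (p : ℕ) [Fact p.Prime] (m : ℕ) (x : ℤ_[p]) : ℤ_[p] :=
  if (p : ℤ_[p]) ^ (Nat.log p m + 1) ∣ (x - (m : ℤ_[p])) then 1 else 0

section aux

variable {p : ℕ} [hp : Fact p.Prime]

private lemma vdp_pow_dvd_iff_norm_le {k : ℕ} {z : ℤ_[p]} :
    (p : ℤ_[p]) ^ k ∣ z ↔ ‖z‖ ≤ (p : ℝ) ^ (-(k : ℤ)) := by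
  rw [PadicInt.norm_le_pow_iff_mem_span_pow, Ideal.mem_span_singleton]

private lemma vdp_appr_dvd (x : ℤ_[p]) (n : ℕ) :
    (p : ℤ_[p]) ^ n ∣ x - (x.appr n : ℤ_[p]) :=
  Ideal.mem_span_singleton.mp (PadicInt.appr_spec n x)

private lemma vdp_unique_appr {k m : ℕ} {x : ℤ_[p]} (hm : m < p ^ k)
    (h : (p : ℤ_[p]) ^ k ∣ x - (m : ℤ_[p])) : m = x.appr k := by
  have h2 := vdp_appr_dvd x k
  have h3 : (p : ℤ_[p]) ^ k ∣ (((m : ℤ) - (x.appr k : ℤ) : ℤ) : ℤ_[p]) := by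
    have hd := dvd_sub h2 h
    have he : x - (x.appr k : ℤ_[p]) - (x - (m : ℤ_[p]))
        = (((m : ℤ) - (x.appr k : ℤ) : ℤ) : ℤ_[p]) := by push_cast; ring
    rwa [he] at hd
  rw [vdp_pow_dvd_iff_norm_le, PadicInt.norm_int_le_pow_iff_dvd] at h3
  have hmz : (m : ℤ) < (p : ℤ) ^ k := by exact_mod_cast hm
  have haz : ((x.appr k : ℕ) : ℤ) < (p : ℤ) ^ k := by exact_mod_cast x.appr_lt k
  have h3' : ((p : ℤ)) ^ k ∣ (m : ℤ) - (x.appr k : ℤ) := by exact_mod_cast h3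
  have h4 : ((m : ℤ) - (x.appr k : ℤ)) = 0 :=
    Int.eq_zero_of_abs_lt_dvd h3' (abs_lt.mpr ⟨by omega, by omega⟩)
  have h5 : (m : ℤ) = (x.appr k : ℤ) := by omega
  exact_mod_cast h5

private lemma vdp_mod_dvd (m L : ℕ) :
    (p : ℤ_[p]) ^ L ∣ ((m : ℤ_[p]) - ((m % p ^ L : ℕ) : ℤ_[p])) := by
  rw [← Nat.cast_sub (Nat.mod_le _ _)]
  obtain ⟨c, hc⟩ := Nat.dvd_sub_mod (n := p ^ L) m
  rw [hc]; push_cast; exact dvd_mul_right _ _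

private lemma vdp_term_norm_le (B : ℕ → ℤ_[p]) (m : ℕ) (x : ℤ_[p]) :
    ‖B m * vdpChi p m x‖ ≤ ‖B m‖ := by
  calc ‖B m * vdpChi p m x‖ ≤ ‖B m‖ * ‖vdpChi p m x‖ := norm_mul_le _ _
    _ ≤ ‖B m‖ * 1 := by
        gcongr
        exact PadicInt.norm_le_one _
    _ = ‖B m‖ := mul_one _

/-- Key lemma: partial sums at `p ^ (n+1)` equal `f` evaluated at the approximation. -/
private lemma vdp_key (f : ℤ_[p] → ℤ_[p]) (B : ℕ → ℤ_[p])
    (hB₁ : ∀ m : ℕ, m ≤ p - 1 → B m = f m)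
    (hB₂ : ∀ m : ℕ, p ≤ m → B m = f m - f ((m % p ^ (Nat.log p m) : ℕ) : ℤ_[p]))
    (x : ℤ_[p]) : ∀ n : ℕ,
    ∑ m ∈ Finset.range (p ^ (n + 1)), B m * vdpChi p m x = f (x.appr (n + 1) : ℤ_[p]) := by
  have hp2 : 2 ≤ p := hp.out.two_le
  intro n
  induction n with
  | zero =>
    have ha : x.appr 1 < p := by have := x.appr_lt 1; rwa [pow_one] at this
    rw [pow_one, Finset.sum_eq_single_of_mem (x.appr 1) (Finset.mem_range.mpr ha)]
    · have hlog : Nat.log p (x.appr 1) = 0 := Nat.log_of_lt ha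
      rw [hB₁ _ (by omega), vdpChi, hlog, if_pos, mul_one]
      simpa using vdp_appr_dvd x 1
    · intro m hm hne
      rw [Finset.mem_range] at hm
      have hlog : Nat.log p m = 0 := Nat.log_of_lt hm
      rw [vdpChi, hlog, if_neg, mul_zero]
      intro hdvd
      exact hne (vdp_unique_appr (k := 1) (by rwa [pow_one]) (by simpa using hdvd))
  | succ n ih =>
    have hle : p ^ (n + 1) ≤ p ^ (n + 2) := Nat.pow_le_pow_right (by omega) (by omega)
    rw [Finset.range_eq_Ico, ← Finset.sum_Ico_consecutive _ (Nat.zero_le _) hle,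
      ← Finset.range_eq_Ico, ih]
    by_cases hcase : p ^ (n + 1) ≤ x.appr (n + 2)
    · rw [Finset.sum_eq_single_of_mem (x.appr (n + 2))
        (Finset.mem_Ico.mpr ⟨hcase, x.appr_lt _⟩)]
      · have hlog : Nat.log p (x.appr (n + 2)) = n + 1 :=
          Nat.log_eq_of_pow_le_of_lt_pow hcase (x.appr_lt _)
        have hchi : vdpChi p (x.appr (n + 2)) x = 1 := by
          rw [vdpChi, hlog, if_pos]
          exact vdp_appr_dvd x (n + 2)
        have hpa : p ≤ x.appr (n + 2) := by
          calc p = p ^ 1 := (pow_one p).symm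
            _ ≤ p ^ (n + 1) := Nat.pow_le_pow_right (by omega) (by omega)
            _ ≤ _ := hcase
        rw [hchi, mul_one, hB₂ _ hpa]
        have hmod : x.appr (n + 2) % p ^ Nat.log p (x.appr (n + 2)) = x.appr (n + 1) := by
          rw [hlog]
          refine vdp_unique_appr (Nat.mod_lt _ (pow_pos (by omega : 0 < p) _)) ?_
          have h1 : (p : ℤ_[p]) ^ (n + 1) ∣ x - (x.appr (n + 2) : ℤ_[p]) :=
            dvd_trans (pow_dvd_pow _ (by omega)) (vdp_appr_dvd x (n + 2))
          have h2 := vdp_mod_dvd (p := p) (x.appr (n + 2)) (n + 1)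
          have := dvd_add h1 h2
          have he : x - (x.appr (n + 2) : ℤ_[p]) +
              ((x.appr (n + 2) : ℤ_[p]) - ((x.appr (n + 2) % p ^ (n + 1) : ℕ) : ℤ_[p]))
              = x - ((x.appr (n + 2) % p ^ (n + 1) : ℕ) : ℤ_[p]) := by ring
          rwa [he] at this
        rw [hmod]; ring
      · intro m hm hne
        obtain ⟨h1, h2⟩ := Finset.mem_Ico.mp hm
        have hlog := Nat.log_eq_of_pow_le_of_lt_pow h1 h2
        rw [vdpChi, hlog, if_neg, mul_zero]
        intro hdvd
        exact hne (vdp_unique_appr h2 hdvd)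
    · have hIco0 : ∑ m ∈ Finset.Ico (p ^ (n + 1)) (p ^ (n + 2)), B m * vdpChi p m x = 0 := by
        refine Finset.sum_eq_zero fun m hm => ?_
        obtain ⟨h1, h2⟩ := Finset.mem_Ico.mp hm
        have hlog := Nat.log_eq_of_pow_le_of_lt_pow h1 h2
        rw [vdpChi, hlog, if_neg, mul_zero]
        intro hdvd
        have := vdp_unique_appr h2 hdvd
        omega
      rw [hIco0, add_zero]
      have : x.appr (n + 2) = x.appr (n + 1) :=
        vdp_unique_appr (not_le.mp hcase)
          (dvd_trans (pow_dvd_pow _ (by omega)) (vdp_appr_dvd x (n + 2)))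
      rw [← this]

end aux

theorem vanDerPut_expansion (p : ℕ) [Fact p.Prime]
    (f : ℤ_[p] → ℤ_[p]) (hf : Continuous f) (B : ℕ → ℤ_[p])
    (hB₁ : ∀ m : ℕ, m ≤ p - 1 → B m = f m)
    (hB₂ : ∀ m : ℕ, p ≤ m → B m = f m - f ((m % p ^ (Nat.log p m) : ℕ) : ℤ_[p])) :
    (∀ x : ℤ_[p], HasSum (fun m : ℕ => B m * vdpChi p m x) (f x)) ∧
    TendstoUniformly
      (fun (N : ℕ) (x : ℤ_[p]) => ∑ m ∈ Finset.range N, B m * vdpChi p m x)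
      f Filter.atTop := by
  have hp2 : 1 < p := (Fact.out : p.Prime).one_lt
  have hu : UniformContinuous f := CompactSpace.uniformContinuous_of_continuous hf
  -- uniform smallness of the coefficients and approximants
  have key2 : ∀ ε > (0 : ℝ), ∃ k : ℕ, 1 ≤ k ∧ (∀ m : ℕ, p ^ k ≤ m → ‖B m‖ < ε) ∧
      (∀ (x : ℤ_[p]) (n : ℕ), k ≤ n → ‖f (x.appr n : ℤ_[p]) - f x‖ < ε) := by
    intro ε hε
    obtain ⟨δ, hδ, hδ'⟩ := Metric.uniformContinuous_iff.mp hu ε hε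
    have hpinv : ((p : ℝ)⁻¹) < 1 := by
      rw [inv_lt_one_iff₀]; right; exact_mod_cast hp2
    obtain ⟨k0, hk0⟩ := exists_pow_lt_of_lt_one hδ hpinv
    set k := k0 + 1 with hk
    have hppos : (0 : ℝ) < (p : ℝ) := by positivity
    have hpk : (p : ℝ) ^ (-(k : ℤ)) < δ := by
      have h1 : ((p : ℝ)⁻¹) ^ k ≤ ((p : ℝ)⁻¹) ^ k0 :=
        pow_le_pow_of_le_one (by positivity) hpinv.le (by omega)
      have h2 : (p : ℝ) ^ (-(k : ℤ)) = ((p : ℝ)⁻¹) ^ k := by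
        rw [zpow_neg, inv_pow, zpow_natCast]
      rw [h2]; exact lt_of_le_of_lt h1 hk0
    have hmono : ∀ j : ℕ, k ≤ j → (p : ℝ) ^ (-(j : ℤ)) ≤ (p : ℝ) ^ (-(k : ℤ)) := by
      intro j hj
      refine zpow_le_zpow_right₀ (by exact_mod_cast hp2.le) (by omega)
    refine ⟨k, by omega, ?_, ?_⟩
    · intro m hm
      have hm0 : m ≠ 0 :=
        Nat.ne_zero_of_lt (Nat.lt_of_lt_of_le (pow_pos (by omega : 0 < p) k) hm)
      have hmp : p ≤ m := le_trans (le_trans (pow_one p).ge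
        (Nat.pow_le_pow_right (by omega) (show 1 ≤ k by omega))) hm
      have hL : k ≤ Nat.log p m := (Nat.le_log_iff_pow_le hp2 hm0).mpr hm
      rw [hB₂ m hmp]
      apply hδ'
      rw [dist_eq_norm]
      calc ‖(m : ℤ_[p]) - ((m % p ^ Nat.log p m : ℕ) : ℤ_[p])‖
          ≤ (p : ℝ) ^ (-(Nat.log p m : ℤ)) :=
            vdp_pow_dvd_iff_norm_le.mp (vdp_mod_dvd m (Nat.log p m))
        _ ≤ (p : ℝ) ^ (-(k : ℤ)) := hmono _ hL
        _ < δ := hpk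
    · intro x n hn
      apply hδ'
      rw [dist_eq_norm]
      calc ‖(x.appr n : ℤ_[p]) - x‖ = ‖x - (x.appr n : ℤ_[p])‖ := norm_sub_rev _ _
        _ ≤ (p : ℝ) ^ (-(n : ℤ)) := vdp_pow_dvd_iff_norm_le.mp (vdp_appr_dvd x n)
        _ ≤ (p : ℝ) ^ (-(k : ℤ)) := hmono _ hn
        _ < δ := hpk
  -- main estimate
  have est : ∀ ε > (0 : ℝ), ∃ K : ℕ, ∀ N ≥ K, ∀ x : ℤ_[p],
      ‖(∑ m ∈ Finset.range N, B m * vdpChi p m x) - f x‖ < ε := by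
    intro ε hε
    obtain ⟨k, hk1, hBsm, hfx⟩ := key2 (ε / 2) (by positivity)
    refine ⟨p ^ k, fun N hN x => ?_⟩
    have hN0 : N ≠ 0 := by
      have : 0 < p ^ k := pow_pos (by omega : 0 < p) _
      omega
    obtain ⟨n, hn⟩ : ∃ n, n = Nat.log p N := ⟨_, rfl⟩
    have hn1 : k ≤ n := by rw [hn]; exact (Nat.le_log_iff_pow_le hp2 hN0).mpr hN
    have hpn : p ^ n ≤ N := by rw [hn]; exact Nat.pow_log_le_self p hN0
    have hsplit : ∑ m ∈ Finset.range N, B m * vdpChi p m x =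
        (∑ m ∈ Finset.range (p ^ n), B m * vdpChi p m x) +
        ∑ m ∈ Finset.Ico (p ^ n) N, B m * vdpChi p m x := by
      rw [Finset.range_eq_Ico, ← Finset.sum_Ico_consecutive _ (Nat.zero_le _) hpn,
        ← Finset.range_eq_Ico]
    have hkey : ∑ m ∈ Finset.range (p ^ n), B m * vdpChi p m x = f (x.appr n : ℤ_[p]) := by
      obtain ⟨n', rfl⟩ : ∃ n', n = n' + 1 := ⟨n - 1, by omega⟩
      exact vdp_key f B hB₁ hB₂ x n'
    have hIco : ‖∑ m ∈ Finset.Ico (p ^ n) N, B m * vdpChi p m x‖ ≤ ε / 2 := by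
      refine IsUltrametricDist.norm_sum_le_of_forall_le_of_nonneg (by positivity) fun m hm => ?_
      have h1 : p ^ k ≤ m :=
        le_trans (Nat.pow_le_pow_right (by omega) hn1) (Finset.mem_Ico.mp hm).1
      exact le_trans (vdp_term_norm_le B m x) (hBsm m h1).le
    have heq : (∑ m ∈ Finset.range N, B m * vdpChi p m x) - f x =
        (∑ m ∈ Finset.Ico (p ^ n) N, B m * vdpChi p m x) +
        (f (x.appr n : ℤ_[p]) - f x) := by
      rw [hsplit, hkey]; ring
    rw [heq]
    calc ‖_ + _‖ ≤ max ‖∑ m ∈ Finset.Ico (p ^ n) N, B m * vdpChi p m x‖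
          ‖f (x.appr n : ℤ_[p]) - f x‖ := IsUltrametricDist.norm_add_le_max _ _
      _ < ε := max_lt (lt_of_le_of_lt hIco (by linarith)) (by linarith [hfx x n hn1])
  constructor
  · intro x
    have hsummable : Summable (fun m : ℕ => B m * vdpChi p m x) := by
      apply NonarchimedeanAddGroup.summable_of_tendsto_cofinite_zero
      rw [Nat.cofinite_eq_atTop, NormedAddCommGroup.tendsto_nhds_zero]
      intro ε hε
      obtain ⟨k, _, hBsm, _⟩ := key2 ε hε
      filter_upwards [Filter.eventually_ge_atTop (p ^ k)] with m hm
      exact lt_of_le_of_lt (vdp_term_norm_le B m x) (hBsm m hm)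
    have h1 : Filter.Tendsto (fun N : ℕ => ∑ m ∈ Finset.range N, B m * vdpChi p m x)
        Filter.atTop (nhds (f x)) := by
      rw [Metric.tendsto_atTop]
      intro ε hε
      obtain ⟨K, hK⟩ := est ε hε
      exact ⟨K, fun N hN => by rw [dist_eq_norm]; exact hK N hN x⟩
    have h2 := hsummable.hasSum
    rwa [tendsto_nhds_unique h2.tendsto_sum_nat h1] at h2
  · rw [Metric.tendstoUniformly_iff]
    intro ε hε
    obtain ⟨K, hK⟩ := est ε hε
    filter_upwards [Filter.eventually_ge_atTop K] with N hN x
    rw [dist_eq_norm, norm_sub_rev]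
    exact hK N hN x
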